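/- Under the extended Case-C2 setup, the removal of v_4 disconnects d_2 from both sources; that is, every path from s_1 to d_2 contains v_4 and every path from s_2 to d_2 contains v_4. -/

import Mathlib

open List

/-- `IsPath E p u w` : the nonempty list `p` of vertices is a directed path
from `u` to `w` with respect to the edge relation `E`. -/
def IsPath {V : Type*} (E : V → V → Prop) (p : List V) (u w : V) : Prop :=
  p ≠ [] ∧ p.head? = some u ∧ p.getLast? = some w ∧ p.Chain' E

/-- `Reaches E u w` (written `u ~> w`) : there is a directed path from `u` to `w`. -/
def Reaches {V : Type*} (E : V → V → Prop) (u w : V) : Prop :=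
  ∃ p, IsPath E p u w

/-- A two-unicast layered network: a finite directed graph, with two sources
`s1, s2` and two destinations `d1, d2` (all four distinct), vertices partitioned
into layers `1, ..., r` such that every edge goes from a layer to the next one,
the first layer is `{s1, s2}`, the last layer is `{d1, d2}`, and each source
reaches its corresponding destination. -/
structure TwoUnicastNetwork (V : Type*) [Fintype V] where
  E : V → V → Prop
  s1 : V
  s2 : V
  d1 : V
  d2 : V
  r : ℕ
  layer : V → ℕ
  layer_pos : ∀ v, 1 ≤ layer v
  layer_le : ∀ v, layer v ≤ r
  edge_layer : ∀ u w, E u w → layer w = layer u + 1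
  s_ne : s1 ≠ s2
  d_ne : d1 ≠ d2
  sd_ne : ∀ s d, (s = s1 ∨ s = s2) → (d = d1 ∨ d = d2) → s ≠ d
  first_layer : ∀ v, layer v = 1 ↔ v = s1 ∨ v = s2
  last_layer : ∀ v, layer v = r ↔ v = d1 ∨ v = d2
  conn1 : Reaches E s1 d1
  conn2 : Reaches E s2 d2

/-- `InterferesOn N S Ri srcOther v` : within the induced subgraph `G[S]`, the
node `v` causes interference on the path `Ri` : `v ∈ S`, `v ∉ Ri`, there is an
edge (inside `G[S]`) from `v` into a node of `Ri`, and there is a path from the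
other source `srcOther` to `v` lying inside `G[S]` and disjoint from `Ri`. -/
def InterferesOn {V : Type*} [Fintype V] (N : TwoUnicastNetwork V) (S : Set V)
    (Ri : List V) (srcOther : V) (v : V) : Prop :=
  v ∈ S ∧ v ∉ Ri ∧ (∃ w ∈ Ri, w ∈ S ∧ N.E v w) ∧
    ∃ q, IsPath N.E q srcOther v ∧ (∀ x ∈ q, x ∈ S) ∧ ∀ x ∈ q, x ∉ Ri

/-- `n_i(G[S])` : the number of nodes causing interference on `Ri` within the
induced subgraph `G[S]`, the interfering path coming from `srcOther`. -/
noncomputable def nInterf {V : Type*} [Fintype V] (N : TwoUnicastNetwork V)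
    (S : Set V) (Ri : List V) (srcOther : V) : ℕ :=
  {v | InterferesOn N S Ri srcOther v}.ncard

/-- `n_i^D` : the number of nodes of the other path `Rother` causing (direct)
interference on `Ri` in `G`. -/
noncomputable def nDirect {V : Type*} [Fintype V] (N : TwoUnicastNetwork V)
    (Ri Rother : List V) (srcOther : V) : ℕ :=
  {v | InterferesOn N Set.univ Ri srcOther v ∧ v ∈ Rother}.ncard

/-- The pair `(R1, R2)` (paths `s1 → d1` and `s2 → d2`) has manageable
interference: there is `S ⊇ R1 ∪ R2` with `n_1(G[S]) ≠ 1` and `n_2(G[S]) ≠ 1`. -/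
def Manageable {V : Type*} [Fintype V] (N : TwoUnicastNetwork V)
    (R1 R2 : List V) : Prop :=
  ∃ S : Set V, (∀ x ∈ R1, x ∈ S) ∧ (∀ x ∈ R2, x ∈ S) ∧
    nInterf N S R1 N.s2 ≠ 1 ∧ nInterf N S R2 N.s1 ≠ 1

/-- The pair `(R1, R2)` has `(s1,d1)`-manageable interference. -/
def Manageable1 {V : Type*} [Fintype V] (N : TwoUnicastNetwork V)
    (R1 R2 : List V) : Prop :=
  ∃ S : Set V, (∀ x ∈ R1, x ∈ S) ∧ (∀ x ∈ R2, x ∈ S) ∧ nInterf N S R1 N.s2 ≠ 1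

/-- The pair `(R1, R2)` has `(s2,d2)`-manageable interference. -/
def Manageable2 {V : Type*} [Fintype V] (N : TwoUnicastNetwork V)
    (R1 R2 : List V) : Prop :=
  ∃ S : Set V, (∀ x ∈ R1, x ∈ S) ∧ (∀ x ∈ R2, x ∈ S) ∧ nInterf N S R2 N.s1 ≠ 1

/-- Removal of the vertex `v` disconnects `a` from `b` :
every path from `a` to `b` contains `v`. -/
def CutVert {V : Type*} [Fintype V] (N : TwoUnicastNetwork V) (v a b : V) : Prop :=
  ∀ p, IsPath N.E p a b → v ∈ p



theorem IsPath.spliceEdge {V : Type*} {E : V → V → Prop} {q q' : List V} {u v w z : V}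
    (h1 : IsPath E q u v) (e : E v w) (h2 : IsPath E q' w z) :
    IsPath E (q ++ q') u z := by
  obtain ⟨hq, hh, hl, hc⟩ := h1
  obtain ⟨hq', hh', hl', hc'⟩ := h2
  refine ⟨by simp [hq], ?_, ?_, ?_⟩
  · rw [List.head?_append, hh]; rfl
  · rw [List.getLast?_append, hl']; rfl
  · rw [List.Chain', List.isChain_append]
    refine ⟨hc, hc', fun x hx y hy => ?_⟩
    rw [hl] at hx; rw [hh'] at hy
    simp at hx hy; subst hx; subst hy; exact e

theorem IsPath.prefix' {V : Type*} {E : V → V → Prop} {q : List V} {u w x : V}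
    (h : IsPath E q u w) (hx : x ∈ q) :
    ∃ q₁, IsPath E q₁ u x ∧ ∀ a ∈ q₁, a ∈ q := by
  obtain ⟨s, t, rfl⟩ := List.append_of_mem hx
  obtain ⟨hq, hh, hl, hc⟩ := h
  refine ⟨s ++ [x], ⟨by simp, ?_, List.getLast?_concat (l := s), ?_⟩,
    fun a ha => by simp at ha ⊢; tauto⟩
  · cases s with
    | nil => simpa using hh
    | cons b s' => simpa using hh
  · have heq : s ++ x :: t = (s ++ [x]) ++ t := by simp
    rw [heq, List.Chain', List.isChain_append] at hc
    exact hc.1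

theorem IsPath.suffix' {V : Type*} {E : V → V → Prop} {q : List V} {u w x : V}
    (h : IsPath E q u w) (hx : x ∈ q) :
    ∃ q₂, IsPath E q₂ x w ∧ ∀ a ∈ q₂, a ∈ q := by
  obtain ⟨s, t, rfl⟩ := List.append_of_mem hx
  obtain ⟨hq, hh, hl, hc⟩ := h
  refine ⟨x :: t, ⟨by simp, rfl, ?_, ?_⟩, fun a ha => by simp at ha ⊢; tauto⟩
  · rw [List.getLast?_append] at hl
    cases h' : (x :: t).getLast? with
    | none => simp at h'
    | some y => rw [h'] at hl; simp [Option.or] at hl; exact congrArg some hl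
  · rw [List.Chain', List.isChain_append] at hc
    exact hc.2.1

theorem IsPath.splice' {V : Type*} {E : V → V → Prop} {q q' : List V} {u w x : V}
    (h1 : IsPath E q u x) (h2 : IsPath E q' x w) :
    ∃ r, IsPath E r u w ∧ ∀ a ∈ r, a ∈ q ∨ a ∈ q' := by
  obtain ⟨hq', hh', hl', hc'⟩ := h2
  cases q' with
  | nil => exact absurd rfl hq'
  | cons b t =>
    have hb : b = x := by simpa using hh'
    subst hb
    cases t with
    | nil =>
      have hw : w = b := by simpa using hl'.symm
      exact ⟨q, hw ▸ h1, fun a ha => Or.inl ha⟩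
    | cons c t' =>
      have e : E b c := (List.isChain_cons_cons.mp hc').1
      have h2' : IsPath E (c :: t') c w :=
        ⟨by simp, rfl, by simpa using hl', (List.isChain_cons_cons.mp hc').2⟩
      refine ⟨q ++ (c :: t'), h1.spliceEdge e h2', fun a ha => ?_⟩
      simp at ha
      rcases ha with h|h
      · exact Or.inl h
      · exact Or.inr (by simp [h])

theorem statement12 {V : Type*} [Fintype V]
    (N : TwoUnicastNetwork V)
    (P11 P22 : List V)
    (v1 v2 : V)
    (hP11 : IsPath N.E P11 N.s1 N.d1)
    (hP22 : IsPath N.E P22 N.s2 N.d2)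
    (hdisj : P11.Disjoint P22)
    (hNoMan : ∀ R1 R2 : List V, IsPath N.E R1 N.s1 N.d1 → IsPath N.E R2 N.s2 N.d2 →
      R1.Disjoint R2 → ¬ Manageable N R1 R2)
    (hn1 : nInterf N Set.univ P11 N.s2 = 1)
    (hn1D : nDirect N P11 P22 N.s2 = 1)
    (hv2unique : {v | InterferesOn N Set.univ P11 N.s2 v} = {v2})
    (hv2P22 : v2 ∈ P22)
    (hv1P11 : v1 ∈ P11)
    (hv2v1 : N.E v2 v1)
    (hedgeunique : ∀ u ∈ P22, ∀ w ∈ P11, N.E u w → u = v2 ∧ w = v1)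
    (Q11 Z11 : List V)
    (v3 v4 : V)
    (hP21cut : ∀ p : List V, IsPath N.E p N.s2 N.d1 → v2 ∈ p ∧ v1 ∈ p)
    (hQ11 : IsPath N.E Q11 N.s1 N.d1)
    (hv1Q11 : v1 ∉ Q11)
    (hQ11disj : Q11.Disjoint P22)
    (hQnoDirect : {v | InterferesOn N Set.univ Q11 N.s2 v ∧ v ∈ P22} = ∅)
    (hv3Q11 : v3 ∈ Q11)
    (hv3unique : {v | InterferesOn N Set.univ P22 N.s1 v ∧ v ∈ Q11} = {v3})
    (hv4P22 : v4 ∈ P22)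
    (hv3v4 : N.E v3 v4)
    (hv3v4unique : ∀ w ∈ P22, N.E v3 w → w = v4)
    (hP12cut : ∀ p : List V, IsPath N.E p N.s1 N.d2 → v3 ∈ p ∧ v4 ∈ p)
    (hZ11 : IsPath N.E Z11 N.s1 N.d1)
    (hv3Z11 : v3 ∉ Z11)
    (hv1Z11 : v1 ∈ Z11)
    (hZ11disj : Z11.Disjoint P22)
    (hZnoDirect : {v | InterferesOn N Set.univ P22 N.s1 v ∧ v ∈ Z11} = ∅)
    (hv2Zunique : {v | InterferesOn N Set.univ Z11 N.s2 v ∧ v ∈ P22} = {v2})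
    (hv2v1unique : ∀ w ∈ Z11, N.E v2 w → w = v1) :
    (∀ p : List V, IsPath N.E p N.s1 N.d2 → v4 ∈ p) ∧
    (∀ p : List V, IsPath N.E p N.s2 N.d2 → v4 ∈ p) := by
  have part1 : ∀ p, IsPath N.E p N.s1 N.d2 → v4 ∈ p := fun p hp => (hP12cut p hp).2
  refine ⟨part1, ?_⟩
  intro p hp
  by_contra hv4p
  have hv4Q : v4 ∉ Q11 := fun h => hQ11disj h hv4P22
  have hv4Z : v4 ∉ Z11 := fun h => hZ11disj h hv4P22
  have hdisjQp : Q11.Disjoint p := by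
    intro x hxQ hxp
    obtain ⟨q₁, hq₁, hq₁mem⟩ := hQ11.prefix' hxQ
    obtain ⟨q₂, hq₂, hq₂mem⟩ := hp.suffix' hxp
    obtain ⟨r, hr, hrmem⟩ := hq₁.splice' hq₂
    rcases hrmem v4 (part1 r hr) with h|h
    · exact hv4Q (hq₁mem _ h)
    · exact hv4p (hq₂mem _ h)
  have stepB : ∀ a ∈ Q11, ∀ b ∈ p, ¬ N.E a b := by
    intro a haQ b hbp e
    obtain ⟨q₁, hq₁, hq₁mem⟩ := hQ11.prefix' haQ
    obtain ⟨q₂, hq₂, hq₂mem⟩ := hp.suffix' hbp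
    have hr := hq₁.spliceEdge e hq₂
    have hv4 := part1 _ hr
    rw [List.mem_append] at hv4
    rcases hv4 with h|h
    · exact hv4Q (hq₁mem _ h)
    · exact hv4p (hq₂mem _ h)
  have stepC : ∀ a ∈ p, ∀ b ∈ Q11, ¬ N.E a b := by
    intro a hap b hbQ e
    obtain ⟨q₁, hq₁, hq₁mem⟩ := hp.prefix' hap
    obtain ⟨q₂, hq₂, hq₂mem⟩ := hQ11.suffix' hbQ
    have hr := hq₁.spliceEdge e hq₂
    have hv1 := (hP21cut _ hr).2
    rw [List.mem_append] at hv1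
    have hv1p : v1 ∈ p := by
      rcases hv1 with h|h
      · exact hq₁mem _ h
      · exact absurd (hq₂mem _ h) hv1Q11
    obtain ⟨z₁, hz₁, hz₁mem⟩ := hZ11.prefix' hv1Z11
    obtain ⟨p₂, hp₂, hp₂mem⟩ := hp.suffix' hv1p
    obtain ⟨r, hr', hrmem⟩ := hz₁.splice' hp₂
    rcases hrmem v4 (part1 r hr') with h|h
    · exact hv4Z (hz₁mem _ h)
    · exact hv4p (hp₂mem _ h)
  apply hNoMan Q11 p hQ11 hp hdisjQp
  refine ⟨{x | x ∈ Q11 ∨ x ∈ p}, fun x hx => Or.inl hx, fun x hx => Or.inr hx, ?_, ?_⟩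
  · have hempty : {v | InterferesOn N {x | x ∈ Q11 ∨ x ∈ p} Q11 N.s2 v} = ∅ := by
      ext v
      simp only [Set.mem_setOf_eq, Set.mem_empty_iff_false, iff_false]
      rintro ⟨hvS, hvQ, ⟨w, hwQ, _, e⟩, _⟩
      rcases hvS with h|h
      · exact hvQ h
      · exact stepC v h w hwQ e
    rw [nInterf, hempty]
    simp
  · have hempty : {v | InterferesOn N {x | x ∈ Q11 ∨ x ∈ p} p N.s1 v} = ∅ := by
      ext v
      simp only [Set.mem_setOf_eq, Set.mem_empty_iff_false, iff_false]
      rintro ⟨hvS, hvp, ⟨w, hwp, _, e⟩, _⟩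
      rcases hvS with h|h
      · exact stepB v h w hwp e
      · exact hvp h
    rw [nInterf, hempty]
    simp
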